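/- Let k ≥ 1, d ∈ {2, 3}, and n ≥ k(d-1)+2 be integers. Then the maximum number of edges of a simple k-connected graph of order n and diameter d equals ((3d-5)k² + (5-d)k)/2 + C(n-kd+k-2, 2) + ((d-1)k+4-d)(n-kd+k-2), where C(m,2) = m(m-1)/2 denotes the binomial coefficient. That is, every simple k-connected graph of order n and diameter d has at most this many edges, and some simple k-connected graph of order n and diameter d attains this number of edges. -/

import Mathlib

/-- A graph is `k`-connected if it has more than `k` vertices and remains connected
whenever fewer than `k` vertices are deleted. -/
def SimpleGraph.KConnected {V : Type*} [Fintype V] (k : ℕ) (G : SimpleGraph V) : Prop :=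
  k < Fintype.card V ∧ ∀ S : Set V, S.ncard < k → (G.induce Sᶜ).Connected

section OreAux

open SimpleGraph Finset

lemma two_mul_choose_two (n : ℕ) : 2 * (n.choose 2 : ℤ) = n * (n - 1) := by
  induction n with
  | zero => simp
  | succ m ih =>
    rw [Nat.choose_succ_succ, Nat.choose_one_right]
    push_cast at ih ⊢
    linarith


lemma compl_many {V : Type} [Fintype V] [DecidableEq V] (G : SimpleGraph V) [DecidableRel G.Adj]
    {u v : V} (h : G.dist u v = 3) :
    Fintype.card V - 1 ≤ Gᶜ.edgeFinset.card := by
  classical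
  have hne : u ≠ v := by
    rintro rfl; simp [SimpleGraph.dist_self] at h
  have hnadj : ¬G.Adj u v := by
    intro hadj
    rw [← SimpleGraph.dist_eq_one_iff_adj] at hadj
    omega
  have hno2 : ∀ w, G.Adj u w → ¬G.Adj w v := by
    intro w h1 h2
    have := G.dist_le (SimpleGraph.Walk.cons h1 (SimpleGraph.Walk.cons h2 SimpleGraph.Walk.nil))
    simp at this
    omega
  set f : V → Sym2 V := fun w => if G.Adj u w then s(w, v) else s(w, u) with hf
  set M : Finset (Sym2 V) := insert s(u, v) (((Finset.univ.erase u).erase v).image f) with hM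
  have hsub : M ⊆ Gᶜ.edgeFinset := by
    intro e he
    rw [hM, Finset.mem_insert] at he
    rcases he with rfl | he
    · simp [SimpleGraph.mem_edgeFinset, SimpleGraph.compl_adj, hne, hnadj]
    · obtain ⟨w, hw, rfl⟩ := Finset.mem_image.mp he
      simp only [Finset.mem_erase] at hw
      obtain ⟨hwv, hwu, -⟩ := hw
      by_cases hadj : G.Adj u w
      · simp only [hf, if_pos hadj]
        simp [SimpleGraph.mem_edgeFinset, SimpleGraph.compl_adj, hwv, hno2 w hadj]
      · simp only [hf, if_neg hadj]
        have : ¬G.Adj w u := fun hx => hadj hx.symm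
        simp [SimpleGraph.mem_edgeFinset, SimpleGraph.compl_adj, hwu, this]
  have hinj : Set.InjOn f ((Finset.univ.erase u).erase v) := by
    intro a ha b hb hab
    simp only [Finset.coe_erase, Set.mem_diff, Set.mem_singleton_iff] at ha hb
    obtain ⟨⟨-, hau⟩, hav⟩ := ha
    obtain ⟨⟨-, hbu⟩, hbv⟩ := hb
    simp only [hf] at hab
    split_ifs at hab with h1 h2 h2 <;> rw [Sym2.eq_iff] at hab <;> tauto
  have hcard : M.card = Fintype.card V - 1 := by
    rw [hM, Finset.card_insert_of_notMem, Finset.card_image_of_injOn hinj]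
    · have h2 : 2 ≤ Fintype.card V := Fintype.one_lt_card_iff_nontrivial.mpr ⟨u, v, hne⟩
      rw [Finset.card_erase_of_mem (by simp [Finset.mem_erase, hne.symm]),
        Finset.card_erase_of_mem (Finset.mem_univ u), Finset.card_univ]
      omega
    · intro hmem
      obtain ⟨w, hw, hwe⟩ := Finset.mem_image.mp hmem
      simp only [Finset.mem_erase] at hw
      obtain ⟨hwv, hwu, -⟩ := hw
      simp only [hf] at hwe
      split_ifs at hwe <;> rw [Sym2.eq_iff] at hwe <;> tauto
  calc Fintype.card V - 1 = M.card := hcard.symm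
    _ ≤ _ := Finset.card_le_card hsub


def band {V : Type} (c : V → ℕ) : SimpleGraph V where
  Adj x y := x ≠ y ∧ c x ≤ c y + 1 ∧ c y ≤ c x + 1
  symm := by constructor; intro x y ⟨h1, h2, h3⟩; exact ⟨h1.symm, h3, h2⟩
  loopless := by constructor; intro x ⟨h, _⟩; exact h rfl

instance {V : Type} [DecidableEq V] (c : V → ℕ) : DecidableRel (band c).Adj :=
  fun _ _ => instDecidableAnd

lemma band_adj {V : Type} (c : V → ℕ) (x y : V) :
    (band c).Adj x y ↔ x ≠ y ∧ c x ≤ c y + 1 ∧ c y ≤ c x + 1 := Iff.rfl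

-- vertex-avoiding lemma
lemma exists_avoid {V : Type} [Fintype V] [DecidableEq V] {k : ℕ} (W : Finset V) (S : Set V)
    (hS : S.ncard < k) (hW : k ≤ W.card) : ∃ w ∈ W, w ∉ S := by
  classical
  have hfin : S.Finite := Set.toFinite S
  have hT : hfin.toFinset.card < k := by
    rwa [← Set.ncard_eq_toFinset_card]
  have : 0 < (W \ hfin.toFinset).card := by
    have := Finset.le_card_sdiff hfin.toFinset W
    omega
  obtain ⟨w, hw⟩ := Finset.card_pos.mp this
  rw [Finset.mem_sdiff] at hw
  exact ⟨w, hw.1, by simpa using hw.2⟩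

def c2 (n : ℕ) : Fin n → ℕ := fun x => if x.val = 0 then 0 else if x.val = n - 1 then 2 else 1

lemma band2_nadj {n : ℕ} (hn : 3 ≤ n) (x y : Fin n) :
    ¬ (band (c2 n)).Adj x y ↔
      x = y ∨ (x.val = 0 ∧ y.val = n - 1) ∨ (x.val = n - 1 ∧ y.val = 0) := by
  have h1 := x.isLt
  have h2 := y.isLt
  rw [band_adj]
  simp only [c2, ne_eq, Fin.ext_iff]
  split_ifs <;> omega

lemma band2_conn {n k : ℕ} (hn : 3 ≤ n) (hk : k ≤ n - 2) (S : Set (Fin n))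
    (hS : S.ncard < k) : ((band (c2 n)).induce Sᶜ).Connected := by
  classical
  set W : Finset (Fin n) := Finset.univ.filter (fun x : Fin n => x.val ≠ 0 ∧ x.val ≠ n - 1)
    with hW
  have hWcard : k ≤ W.card := by
    have : (Finset.univ : Finset (Fin (n-2))).card ≤ W.card := by
      apply Finset.card_le_card_of_injOn (fun j => (⟨j.val + 1, by have := j.isLt; omega⟩ : Fin n))
      · intro j _
        have := j.isLt
        simp only [Finset.mem_coe, hW, Finset.mem_filter, Finset.mem_univ, true_and]
        omega
      · intro a _ b _ hab
        have := congrArg Fin.val hab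
        simp only at this
        exact Fin.ext (by omega)
    simp only [Finset.card_univ, Fintype.card_fin] at this
    omega
  obtain ⟨w, hwW, hwS⟩ := exists_avoid W S hS hWcard
  simp only [hW, Finset.mem_filter] at hwW
  obtain ⟨-, hw0, hw1⟩ := hwW
  have hwc : w ∈ Sᶜ := hwS
  rw [SimpleGraph.connected_iff]
  refine ⟨?_, ⟨⟨w, hwc⟩⟩⟩
  rintro ⟨x, hx⟩ ⟨y, hy⟩
  by_cases hxy : x = y
  · subst hxy
    rfl
  by_cases hadj : (band (c2 n)).Adj x y
  · exact SimpleGraph.Adj.reachable hadj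
  · rw [band2_nadj hn] at hadj
    rcases hadj with rfl | h | h
    · exact absurd rfl hxy
    all_goals {
      have hax : (band (c2 n)).Adj x w := by
        rw [band_adj]
        have := x.isLt
        simp only [c2, ne_eq, Fin.ext_iff]
        split_ifs <;> omega
      have hay : (band (c2 n)).Adj w y := by
        rw [band_adj]
        have := y.isLt
        simp only [c2, ne_eq, Fin.ext_iff]
        split_ifs <;> omega
      exact SimpleGraph.Reachable.trans
        (SimpleGraph.Adj.reachable
          (show (SimpleGraph.induce Sᶜ (band (c2 n))).Adj ⟨x, hx⟩ ⟨w, hwc⟩ from hax))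
        (SimpleGraph.Adj.reachable
          (show (SimpleGraph.induce Sᶜ (band (c2 n))).Adj ⟨w, hwc⟩ ⟨y, hy⟩ from hay)) }

lemma edge_split {V : Type} [Fintype V] [DecidableEq V] (G : SimpleGraph V) [DecidableRel G.Adj] :
    G.edgeFinset.card + Gᶜ.edgeFinset.card = (Fintype.card V).choose 2 := by
  classical
  rw [← SimpleGraph.card_edgeFinset_top_eq_card_choose_two]
  rw [← Finset.card_union_of_disjoint]
  · congr 1
    ext e
    induction e with
    | _ a b =>
      simp only [Finset.mem_union, SimpleGraph.mem_edgeFinset, SimpleGraph.mem_edgeSet,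
        SimpleGraph.compl_adj, SimpleGraph.top_adj]
      constructor
      · rintro (h | h)
        · exact h.ne
        · exact h.1
      · intro h
        by_cases hG : G.Adj a b
        · exact Or.inl hG
        · exact Or.inr ⟨h, hG⟩
  · rw [Finset.disjoint_left]
    intro e he he'
    induction e with
    | _ a b =>
      simp only [SimpleGraph.mem_edgeFinset, SimpleGraph.mem_edgeSet] at he he'
      exact he'.2 he

lemma band2_diam {n : ℕ} (hn : 3 ≤ n) : (band (c2 n)).diam = 2 := by
  classical
  have h0 : (0 : ℕ) < n := by omega
  have hwalk : ∀ (x y : Fin n) (p : (band (c2 n)).Walk x y),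
      x.val = 0 → y.val = n - 1 → 2 ≤ p.length := by
    intro x y p hx hy
    cases p with
    | nil => omega
    | cons h q =>
      cases q with
      | nil =>
        rw [band_adj] at h
        simp only [c2, ne_eq, Fin.ext_iff] at h
        split_ifs at h <;> omega
      | cons h2 q2 =>
        simp only [SimpleGraph.Walk.length_cons]
        omega
  have hediam : (band (c2 n)).ediam = 2 := by
    apply le_antisymm
    · apply SimpleGraph.ediam_le_of_edist_le
      intro x y
      by_cases hxy : x = y
      · subst hxy; simp
      by_cases hadj : (band (c2 n)).Adj x y
      · rw [SimpleGraph.edist_eq_one_iff_adj.mpr hadj]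
        norm_num
      · rw [band2_nadj hn] at hadj
        rcases hadj with rfl | h | h
        · exact absurd rfl hxy
        all_goals {
          have hax : (band (c2 n)).Adj x ⟨1, by omega⟩ := by
            rw [band_adj]; simp only [c2, ne_eq, Fin.ext_iff, Fin.val_mk]
            split_ifs <;> first | exact ‹False›.elim | omega
          have hay : (band (c2 n)).Adj ⟨1, by omega⟩ y := by
            rw [band_adj]; simp only [c2, ne_eq, Fin.ext_iff, Fin.val_mk]
            split_ifs <;> first | exact ‹False›.elim | omega
          have hw := SimpleGraph.Walk.edist_le
            (SimpleGraph.Walk.cons hax (SimpleGraph.Walk.cons hay SimpleGraph.Walk.nil))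
          simpa using hw }
    · have hle : (2 : ℕ∞) ≤ (band (c2 n)).edist ⟨0, h0⟩ ⟨n - 1, by omega⟩ := by
        by_contra hlt
        push_neg at hlt
        have hne : (band (c2 n)).edist ⟨0, h0⟩ ⟨n - 1, by omega⟩ ≠ ⊤ := by
          intro h; rw [h] at hlt; exact absurd hlt (by simp)
        obtain ⟨p, hp⟩ := SimpleGraph.exists_walk_of_edist_ne_top hne
        have hplen : p.length < 2 := by
          have := hp ▸ hlt
          exact_mod_cast this
        have := hwalk _ _ p rfl rfl
        omega
      exact le_trans hle (SimpleGraph.edist_le_ediam)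
  rw [SimpleGraph.diam, hediam]
  rfl

lemma band2_edges {n : ℕ} (hn : 3 ≤ n) :
    (band (c2 n)).edgeFinset.card + 1 = n.choose 2 := by
  classical
  have h0 : (0 : ℕ) < n := by omega
  have hcompl : (band (c2 n))ᶜ.edgeFinset = {s((⟨0, h0⟩ : Fin n), (⟨n - 1, by omega⟩ : Fin n))} := by
    ext e
    induction e with
    | _ a b =>
      simp only [SimpleGraph.mem_edgeFinset, SimpleGraph.mem_edgeSet, SimpleGraph.compl_adj,
        Finset.mem_singleton, Sym2.eq_iff]
      constructor
      · rintro ⟨hab, hnadj⟩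
        rw [band2_nadj hn] at hnadj
        rcases hnadj with rfl | h | h
        · exact absurd rfl hab
        · left; exact ⟨Fin.ext h.1, Fin.ext h.2⟩
        · right; exact ⟨Fin.ext h.1, Fin.ext h.2⟩
      · rintro (⟨rfl, rfl⟩ | ⟨rfl, rfl⟩)
        · refine ⟨?_, ?_⟩
          · simp only [ne_eq, Fin.ext_iff, Fin.val_mk]; omega
          · rw [band2_nadj hn]
            exact Or.inr (Or.inl ⟨rfl, rfl⟩)
        · refine ⟨?_, ?_⟩
          · simp only [ne_eq, Fin.ext_iff, Fin.val_mk]; omega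
          · rw [band2_nadj hn]
            exact Or.inr (Or.inr ⟨rfl, rfl⟩)
  have := edge_split (band (c2 n))
  rw [hcompl] at this
  simp only [Finset.card_singleton, Fintype.card_fin] at this
  omega

lemma band_nadj {V : Type} (c : V → ℕ) (x y : V) :
    ¬ (band c).Adj x y ↔ x = y ∨ c x + 2 ≤ c y ∨ c y + 2 ≤ c x := by
  rw [band_adj]
  rcases eq_or_ne x y with rfl | h
  · simp
  · simp only [h, ne_eq, not_false_eq_true, true_and, false_or]
    omega

def c3 (k n : ℕ) : Fin n → ℕ := fun x =>
  if x.val = 0 then 0 else if x.val ≤ k then 1 else if x.val = n - 1 then 3 else 2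

lemma c3_spec {k n : ℕ} (hk : 1 ≤ k) (hn : 2 * k + 2 ≤ n) (x : Fin n) :
    (c3 k n x = 0 ∧ x.val = 0) ∨ (c3 k n x = 1 ∧ 1 ≤ x.val ∧ x.val ≤ k) ∨
    (c3 k n x = 2 ∧ k + 1 ≤ x.val ∧ x.val ≤ n - 2) ∨ (c3 k n x = 3 ∧ x.val = n - 1) := by
  have := x.isLt
  simp only [c3]
  split_ifs <;> omega

lemma band3_adj_of {k n : ℕ} {u w : Fin n} (h : c3 k n u + 1 = c3 k n w) :
    (band (c3 k n)).Adj u w := by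
  rw [band_adj]
  exact ⟨fun he => by rw [he] at h; omega, by omega, by omega⟩

lemma c3_u0 {k n : ℕ} (h0 : 0 < n) : c3 k n ⟨0, h0⟩ = 0 := by simp [c3]

lemma c3_v0 {k n : ℕ} (hk : 1 ≤ k) (hn : 2 * k + 2 ≤ n) (h1 : n - 1 < n) :
    c3 k n ⟨n - 1, h1⟩ = 3 := by
  simp only [c3, Fin.val_mk]
  rw [if_neg (by omega), if_neg (by omega)]
  simp

lemma c3_a0 {k n : ℕ} (hk : 1 ≤ k) (hn : 2 * k + 2 ≤ n) (h1 : 1 < n) :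
    c3 k n ⟨1, h1⟩ = 1 := by
  simp only [c3, Fin.val_mk]
  rw [if_neg (by omega), if_pos (by omega)]

lemma c3_b0 {k n : ℕ} (hk : 1 ≤ k) (hn : 2 * k + 2 ≤ n) (h1 : k + 1 < n) :
    c3 k n ⟨k + 1, h1⟩ = 2 := by
  simp only [c3, Fin.val_mk]
  rw [if_neg (by omega), if_neg (by omega), if_neg (by omega)]

lemma band3_conn {n k : ℕ} (hk : 1 ≤ k) (hn : 2 * k + 2 ≤ n) (S : Set (Fin n))
    (hS : S.ncard < k) : ((band (c3 k n)).induce Sᶜ).Connected := by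
  classical
  have hAcard : k ≤ (Finset.univ.filter (fun x : Fin n => 1 ≤ x.val ∧ x.val ≤ k)).card := by
    have : (Finset.univ : Finset (Fin k)).card ≤
        (Finset.univ.filter (fun x : Fin n => 1 ≤ x.val ∧ x.val ≤ k)).card :=
      Finset.card_le_card_of_injOn (fun j => (⟨j.val + 1, by have := j.isLt; omega⟩ : Fin n))
        (fun j _ => by
          have := j.isLt
          simp only [Finset.mem_coe, Finset.mem_filter, Finset.mem_univ, true_and, Fin.val_mk]
          omega)
        (fun a _ b _ hab => by
          have := congrArg Fin.val hab
          simp only [Fin.val_mk] at this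
          exact Fin.ext (by omega))
    simpa using this
  have hBcard : k ≤ (Finset.univ.filter (fun x : Fin n => k + 1 ≤ x.val ∧ x.val ≤ n - 2)).card := by
    have : (Finset.univ : Finset (Fin k)).card ≤
        (Finset.univ.filter (fun x : Fin n => k + 1 ≤ x.val ∧ x.val ≤ n - 2)).card :=
      Finset.card_le_card_of_injOn (fun j => (⟨k + 1 + j.val, by have := j.isLt; omega⟩ : Fin n))
        (fun j _ => by
          have := j.isLt
          simp only [Finset.mem_coe, Finset.mem_filter, Finset.mem_univ, true_and, Fin.val_mk]
          omega)
        (fun a _ b _ hab => by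
          have := congrArg Fin.val hab
          simp only [Fin.val_mk] at this
          exact Fin.ext (by omega))
    simpa using this
  obtain ⟨a, haW, haS⟩ := exists_avoid _ S hS hAcard
  obtain ⟨b, hbW, hbS⟩ := exists_avoid _ S hS hBcard
  simp only [Finset.mem_filter, Finset.mem_univ, true_and] at haW hbW
  have hca : c3 k n a = 1 := by
    rcases c3_spec hk hn a with h | h | h | h <;> omega
  have hcb : c3 k n b = 2 := by
    rcases c3_spec hk hn b with h | h | h | h <;> omega
  have hac : a ∈ Sᶜ := haS
  have hbc : b ∈ Sᶜ := hbS
  rw [SimpleGraph.connected_iff]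
  refine ⟨?_, ⟨⟨a, hac⟩⟩⟩
  have reach : ∀ (x : Fin n) (hx : x ∈ Sᶜ),
      ((band (c3 k n)).induce Sᶜ).Reachable ⟨x, hx⟩ ⟨a, hac⟩ := by
    intro x hx
    have hadjb : c3 k n x = 3 → (band (c3 k n)).Adj x b := by
      intro h
      rw [band_adj]
      exact ⟨fun he => by rw [he, hcb] at h; omega, by omega, by omega⟩
    have hba : (band (c3 k n)).Adj b a := by
      rw [band_adj]
      exact ⟨fun he => by rw [he, hca] at hcb; omega, by omega, by omega⟩
    rcases c3_spec hk hn x with ⟨h, -⟩ | ⟨h, -⟩ | ⟨h, -⟩ | ⟨h, -⟩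
    · have hadj : (band (c3 k n)).Adj x a := by
        rw [band_adj]
        exact ⟨fun he => by rw [he, hca] at h; omega, by omega, by omega⟩
      exact SimpleGraph.Adj.reachable
        (show ((band (c3 k n)).induce Sᶜ).Adj ⟨x, hx⟩ ⟨a, hac⟩ from hadj)
    · rcases eq_or_ne x a with rfl | hne
      · rfl
      · have hadj : (band (c3 k n)).Adj x a := by
          rw [band_adj]
          exact ⟨hne, by omega, by omega⟩
        exact SimpleGraph.Adj.reachable
          (show ((band (c3 k n)).induce Sᶜ).Adj ⟨x, hx⟩ ⟨a, hac⟩ from hadj)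
    · have hadj : (band (c3 k n)).Adj x a := by
        rw [band_adj]
        exact ⟨fun he => by rw [he, hca] at h; omega, by omega, by omega⟩
      exact SimpleGraph.Adj.reachable
        (show ((band (c3 k n)).induce Sᶜ).Adj ⟨x, hx⟩ ⟨a, hac⟩ from hadj)
    · refine SimpleGraph.Reachable.trans (SimpleGraph.Adj.reachable
        (show ((band (c3 k n)).induce Sᶜ).Adj ⟨x, hx⟩ ⟨b, hbc⟩ from hadjb h)) ?_
      exact SimpleGraph.Adj.reachable
        (show ((band (c3 k n)).induce Sᶜ).Adj ⟨b, hbc⟩ ⟨a, hac⟩ from hba)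
  rintro ⟨x, hx⟩ ⟨y, hy⟩
  exact (reach x hx).trans (reach y hy).symm

lemma band3_diam {n k : ℕ} (hk : 1 ≤ k) (hn : 2 * k + 2 ≤ n) :
    (band (c3 k n)).diam = 3 := by
  classical
  have h0 : (0 : ℕ) < n := by omega
  have h1 : (1 : ℕ) < n := by omega
  have hk1 : k + 1 < n := by omega
  have hn1 : n - 1 < n := by omega
  have hca := c3_a0 (k := k) hk hn h1
  have hcb := c3_b0 (k := k) hk hn hk1
  have hwalk : ∀ (x y : Fin n) (p : (band (c3 k n)).Walk x y),
      c3 k n x = 0 → c3 k n y = 3 → 3 ≤ p.length := by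
    intro x y p hx hy
    cases p with
    | nil => rw [hx] at hy; omega
    | cons h q =>
      rename_i w
      cases q with
      | nil =>
        rw [band_adj] at h
        omega
      | cons h2 q2 =>
        rename_i w2
        cases q2 with
        | nil =>
          rw [band_adj] at h h2
          omega
        | cons h3 q3 =>
          simp only [SimpleGraph.Walk.length_cons]
          omega
  have half : ∀ x y : Fin n, c3 k n x + 2 ≤ c3 k n y →
      (band (c3 k n)).edist x y ≤ 3 := by
    intro x y hxy
    rcases c3_spec hk hn x with ⟨hx, -⟩ | ⟨hx, -⟩ | ⟨hx, -⟩ | ⟨hx, -⟩ <;>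
      rcases c3_spec hk hn y with ⟨hy, -⟩ | ⟨hy, -⟩ | ⟨hy, -⟩ | ⟨hy, -⟩ <;>
      try omega
    · -- (0, 2)
      have e1 : (band (c3 k n)).Adj x ⟨1, h1⟩ := by
        rw [band_adj]
        exact ⟨fun he => by rw [he, hca] at hx; omega, by omega, by omega⟩
      have e2 : (band (c3 k n)).Adj ⟨1, h1⟩ y := by
        rw [band_adj]
        exact ⟨fun he => by rw [← he, hca] at hy; omega, by omega, by omega⟩
      have hw := SimpleGraph.Walk.edist_le
        (SimpleGraph.Walk.cons e1 (SimpleGraph.Walk.cons e2 SimpleGraph.Walk.nil))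
      simp only [SimpleGraph.Walk.length_cons, SimpleGraph.Walk.length_nil] at hw
      exact hw.trans (by norm_num)
    · -- (0, 3)
      have e1 : (band (c3 k n)).Adj x ⟨1, h1⟩ := by
        rw [band_adj]
        exact ⟨fun he => by rw [he, hca] at hx; omega, by omega, by omega⟩
      have e2 : (band (c3 k n)).Adj ⟨1, h1⟩ ⟨k + 1, hk1⟩ := by
        rw [band_adj]
        refine ⟨fun he => ?_, by omega, by omega⟩
        rw [he, hcb] at hca
        omega
      have e3 : (band (c3 k n)).Adj ⟨k + 1, hk1⟩ y := by
        rw [band_adj]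
        exact ⟨fun he => by rw [← he, hcb] at hy; omega, by omega, by omega⟩
      have hw := SimpleGraph.Walk.edist_le
        (SimpleGraph.Walk.cons e1 (SimpleGraph.Walk.cons e2
          (SimpleGraph.Walk.cons e3 SimpleGraph.Walk.nil)))
      simp only [SimpleGraph.Walk.length_cons, SimpleGraph.Walk.length_nil] at hw
      exact hw.trans (by norm_num)
    · -- (1, 3)
      have e1 : (band (c3 k n)).Adj x ⟨k + 1, hk1⟩ := by
        rw [band_adj]
        exact ⟨fun he => by rw [he, hcb] at hx; omega, by omega, by omega⟩
      have e2 : (band (c3 k n)).Adj ⟨k + 1, hk1⟩ y := by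
        rw [band_adj]
        exact ⟨fun he => by rw [← he, hcb] at hy; omega, by omega, by omega⟩
      have hw := SimpleGraph.Walk.edist_le
        (SimpleGraph.Walk.cons e1 (SimpleGraph.Walk.cons e2 SimpleGraph.Walk.nil))
      simp only [SimpleGraph.Walk.length_cons, SimpleGraph.Walk.length_nil] at hw
      exact hw.trans (by norm_num)
  have hediam : (band (c3 k n)).ediam = 3 := by
    apply le_antisymm
    · apply SimpleGraph.ediam_le_of_edist_le
      intro x y
      by_cases hxy : x = y
      · subst hxy; simp
      by_cases hadj : (band (c3 k n)).Adj x y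
      · rw [SimpleGraph.edist_eq_one_iff_adj.mpr hadj]
        norm_num
      · rw [band_nadj] at hadj
        rcases hadj with rfl | h | h
        · exact absurd rfl hxy
        · exact half x y h
        · rw [SimpleGraph.edist_comm]
          exact half y x h
    · have hle : (3 : ℕ∞) ≤ (band (c3 k n)).edist ⟨0, h0⟩ ⟨n - 1, hn1⟩ := by
        by_contra hlt
        push_neg at hlt
        have hne : (band (c3 k n)).edist ⟨0, h0⟩ ⟨n - 1, hn1⟩ ≠ ⊤ := by
          intro h; rw [h] at hlt; exact absurd hlt (by simp)
        obtain ⟨p, hp⟩ := SimpleGraph.exists_walk_of_edist_ne_top hne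
        have hplen : p.length < 3 := by
          have := hp ▸ hlt
          exact_mod_cast this
        have := hwalk _ _ p (c3_u0 h0) (c3_v0 hk hn hn1)
        omega
      exact le_trans hle (SimpleGraph.edist_le_ediam)
  rw [SimpleGraph.diam, hediam]
  rfl

lemma band3_edges {n k : ℕ} (hk : 1 ≤ k) (hn : 2 * k + 2 ≤ n) :
    (band (c3 k n)).edgeFinset.card + (n - 1) = n.choose 2 := by
  classical
  have h0 : (0 : ℕ) < n := by omega
  have hn1 : n - 1 < n := by omega
  set u0 : Fin n := ⟨0, h0⟩ with hu0
  set v0 : Fin n := ⟨n - 1, hn1⟩ with hv0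
  have hcu : c3 k n u0 = 0 := c3_u0 h0
  have hcv : c3 k n v0 = 3 := c3_v0 hk hn hn1
  have huv : u0 ≠ v0 := by
    intro he
    rw [he, hcv] at hcu
    omega
  set g : Fin n → Sym2 (Fin n) := fun w => if c3 k n w ≤ 1 then s(w, v0) else s(u0, w) with hg
  have himg : (band (c3 k n))ᶜ.edgeFinset = (Finset.univ.erase u0).image g := by
    ext e
    induction e with
    | _ a b =>
      simp only [SimpleGraph.mem_edgeFinset, SimpleGraph.mem_edgeSet, SimpleGraph.compl_adj,
        Finset.mem_image, Finset.mem_erase, Finset.mem_univ, and_true]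
      constructor
      · rintro ⟨hab, hnadj⟩
        rw [band_nadj] at hnadj
        have key : ∀ a b : Fin n, c3 k n a + 2 ≤ c3 k n b →
            ∃ w, w ≠ u0 ∧ g w = s(a, b) := by
          intro a b hle
          rcases c3_spec hk hn a with ⟨ha, hav⟩ | ⟨ha, -⟩ | ⟨ha, -⟩ | ⟨ha, -⟩ <;>
            rcases c3_spec hk hn b with ⟨hb, hbv⟩ | ⟨hb, -⟩ | ⟨hb, hbv⟩ | ⟨hb, hbv⟩ <;>
            try omega
          · -- (0,2) : a = u0, use w = b
            have hau : a = u0 := Fin.ext (by rw [hu0]; exact hav)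
            refine ⟨b, fun he => by rw [he, hcu] at hb; omega, ?_⟩
            rw [hg]
            simp only [if_neg (by omega : ¬ c3 k n b ≤ 1)]
            rw [hau, Sym2.eq_swap]
          · -- (0,3) : a = u0, b = v0, use w = v0
            have hau : a = u0 := Fin.ext (by rw [hu0]; exact hav)
            have hbv' : b = v0 := Fin.ext (by rw [hv0]; exact hbv)
            refine ⟨v0, huv.symm ∘ Eq.symm ∘ Eq.symm, ?_⟩
            rw [hg]
            simp only [if_neg (by rw [hcv]; omega : ¬ c3 k n v0 ≤ 1)]
            rw [hau, hbv']
          · -- (1,3) : b = v0, use w = a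
            have hbv' : b = v0 := Fin.ext (by rw [hv0]; exact hbv)
            refine ⟨a, fun he => by rw [he, hcu] at ha; omega, ?_⟩
            rw [hg]
            simp only [if_pos (by omega : c3 k n a ≤ 1)]
            rw [hbv']
        rcases hnadj with rfl | h | h
        · exact absurd rfl hab
        · exact key a b h
        · obtain ⟨w, hw1, hw2⟩ := key b a h
          exact ⟨w, hw1, by rw [hw2, Sym2.eq_swap]⟩
      · rintro ⟨w, hwu, hge⟩
        have hwne : c3 k n w ≠ 0 := by
          intro hc
          rcases c3_spec hk hn w with ⟨-, hv⟩ | ⟨hc', -⟩ | ⟨hc', -⟩ | ⟨hc', -⟩ <;>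
            try omega
          exact hwu (Fin.ext (by rw [hu0]; exact hv))
        have nadj : ∀ x y : Fin n, c3 k n x + 2 ≤ c3 k n y →
            x ≠ y ∧ ¬(band (c3 k n)).Adj x y := by
          intro x y h
          refine ⟨fun he => by rw [he] at h; omega, ?_⟩
          rw [band_nadj]
          right; left; exact h
        rw [hg] at hge
        simp only at hge
        split_ifs at hge with hcw
        · have hc1 : c3 k n w = 1 := by omega
          obtain ⟨hne', hnadj'⟩ := nadj w v0 (by omega)
          rw [Sym2.eq_iff] at hge
          rcases hge with ⟨rfl, rfl⟩ | ⟨rfl, rfl⟩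
          · exact ⟨hne', hnadj'⟩
          · exact ⟨hne'.symm, fun hA => hnadj' hA.symm⟩
        · obtain ⟨hne', hnadj'⟩ := nadj u0 w (by omega)
          rw [Sym2.eq_iff] at hge
          rcases hge with ⟨rfl, rfl⟩ | ⟨rfl, rfl⟩
          · exact ⟨hne', hnadj'⟩
          · exact ⟨hne'.symm, fun hA => hnadj' hA.symm⟩
  have hinj : Set.InjOn g (Finset.univ.erase u0) := by
    intro w hw w' hw' hww
    simp only [Finset.coe_erase, Set.mem_diff, Set.mem_singleton_iff] at hw hw'
    obtain ⟨-, hwu⟩ := hw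
    obtain ⟨-, hwu'⟩ := hw'
    rw [hg] at hww
    simp only at hww
    split_ifs at hww with hc1 hc2 hc2 <;> rw [Sym2.eq_iff] at hww
    · rcases hww with ⟨h1, -⟩ | ⟨h1, h2⟩
      · exact h1
      · rw [h1, hcv] at hc1; omega
    · rcases hww with ⟨h1, -⟩ | ⟨-, h2⟩
      · exact absurd h1 hwu
      · rw [← h2, hcv] at hcu; omega
    · rcases hww with ⟨h1, -⟩ | ⟨h1, h2⟩
      · exact absurd h1.symm hwu'
      · rw [h1, hcv] at hcu; omega
    · rcases hww with ⟨-, h2⟩ | ⟨h1, -⟩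
      · exact h2
      · exact absurd h1.symm hwu'
  have hcard : ((Finset.univ.erase u0).image g).card = n - 1 := by
    rw [Finset.card_image_of_injOn hinj, Finset.card_erase_of_mem (Finset.mem_univ u0),
      Finset.card_univ, Fintype.card_fin]
  have := edge_split (band (c3 k n))
  rw [himg, hcard, Fintype.card_fin] at this
  exact this

lemma arith2' (k n : ℕ) (hk : 1 ≤ k) (hn : k + 2 ≤ n) :
    ((3 * ((2:ℕ) : ℤ) - 5) * (k : ℤ) ^ 2 + (5 - ((2:ℕ) : ℤ)) * (k : ℤ)) / 2
      + ((n : ℤ) - k * (2:ℕ) + k - 2) * (((n : ℤ) - k * (2:ℕ) + k - 2) - 1) / 2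
      + ((((2:ℕ) : ℤ) - 1) * k + 4 - ((2:ℕ) : ℤ)) * ((n : ℤ) - k * (2:ℕ) + k - 2)
    = (n.choose 2 : ℤ) - 1 := by
  obtain ⟨t, ht⟩ := Int.even_mul_succ_self (k : ℤ)
  obtain ⟨st, hst⟩ := Int.even_mul_succ_self ((n : ℤ) - k * (2:ℕ) + k - 2 - 1)
  have h1 : (3 * ((2:ℕ) : ℤ) - 5) * (k : ℤ) ^ 2 + (5 - ((2:ℕ) : ℤ)) * (k : ℤ) = 2 * (t + k) := by
    push_cast
    linear_combination ht
  have h2 : ((n : ℤ) - k * (2:ℕ) + k - 2) * (((n : ℤ) - k * (2:ℕ) + k - 2) - 1) = 2 * st := by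
    linear_combination hst
  rw [h1, h2, Int.mul_ediv_cancel_left _ two_ne_zero, Int.mul_ediv_cancel_left _ two_ne_zero]
  have h3 : 2 * ((t + k) + st
        + ((((2:ℕ) : ℤ) - 1) * k + 4 - ((2:ℕ) : ℤ)) * ((n : ℤ) - k * (2:ℕ) + k - 2))
      = 2 * ((n.choose 2 : ℤ) - 1) := by
    push_cast at ht hst ⊢
    linear_combination -ht - hst - two_mul_choose_two n
  linarith

lemma arith3' (k n : ℕ) (hk : 1 ≤ k) (hn : 2 * k + 2 ≤ n) :
    ((3 * ((3:ℕ) : ℤ) - 5) * (k : ℤ) ^ 2 + (5 - ((3:ℕ) : ℤ)) * (k : ℤ)) / 2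
      + ((n : ℤ) - k * (3:ℕ) + k - 2) * (((n : ℤ) - k * (3:ℕ) + k - 2) - 1) / 2
      + ((((3:ℕ) : ℤ) - 1) * k + 4 - ((3:ℕ) : ℤ)) * ((n : ℤ) - k * (3:ℕ) + k - 2)
    = (n.choose 2 : ℤ) - ((n : ℤ) - 1) := by
  obtain ⟨st, hst⟩ := Int.even_mul_succ_self ((n : ℤ) - k * (3:ℕ) + k - 2 - 1)
  have h1 : (3 * ((3:ℕ) : ℤ) - 5) * (k : ℤ) ^ 2 + (5 - ((3:ℕ) : ℤ)) * (k : ℤ)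
      = 2 * (2 * (k : ℤ) ^ 2 + k) := by
    push_cast
    ring
  have h2 : ((n : ℤ) - k * (3:ℕ) + k - 2) * (((n : ℤ) - k * (3:ℕ) + k - 2) - 1) = 2 * st := by
    linear_combination hst
  rw [h1, h2, Int.mul_ediv_cancel_left _ two_ne_zero, Int.mul_ediv_cancel_left _ two_ne_zero]
  have h3 : 2 * ((2 * (k : ℤ) ^ 2 + k) + st
        + ((((3:ℕ) : ℤ) - 1) * k + 4 - ((3:ℕ) : ℤ)) * ((n : ℤ) - k * (3:ℕ) + k - 2))
      = 2 * ((n.choose 2 : ℤ) - ((n : ℤ) - 1)) := by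
    push_cast at hst ⊢
    linear_combination -hst - two_mul_choose_two n
  linarith

end OreAux

/-- Ore's theorem, case `d ∈ {2, 3}`: the maximum size of a simple `k`-connected graph of
order `n` and diameter `d` equals
`((3d-5)k² + (5-d)k)/2 + C(n-kd+k-2, 2) + ((d-1)k+4-d)(n-kd+k-2)`. -/
theorem max_size_kConnected_diam_two_three (k d n : ℕ) (hk : 1 ≤ k) (hd : d = 2 ∨ d = 3)
    (hn : k * (d - 1) + 2 ≤ n) :
    (∀ (V : Type) [Fintype V] (G : SimpleGraph V),
        G.KConnected k → Fintype.card V = n → G.diam = d →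
        (G.edgeSet.ncard : ℤ) ≤
          ((3 * (d : ℤ) - 5) * (k : ℤ) ^ 2 + (5 - (d : ℤ)) * (k : ℤ)) / 2
            + ((n : ℤ) - k * d + k - 2) * (((n : ℤ) - k * d + k - 2) - 1) / 2
            + (((d : ℤ) - 1) * k + 4 - (d : ℤ)) * ((n : ℤ) - k * d + k - 2)) ∧
    (∃ (V : Type) (_ : Fintype V) (G : SimpleGraph V),
        G.KConnected k ∧ Fintype.card V = n ∧ G.diam = d ∧
        (G.edgeSet.ncard : ℤ) =
          ((3 * (d : ℤ) - 5) * (k : ℤ) ^ 2 + (5 - (d : ℤ)) * (k : ℤ)) / 2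
            + ((n : ℤ) - k * d + k - 2) * (((n : ℤ) - k * d + k - 2) - 1) / 2
            + (((d : ℤ) - 1) * k + 4 - (d : ℤ)) * ((n : ℤ) - k * d + k - 2)) := by
  classical
  rcases hd with rfl | rfl
  · -- d = 2
    have hn' : k + 2 ≤ n := by omega
    constructor
    · intro V _ G hkc hcard hdiam
      classical
      have hnt : Nontrivial V := by
        rw [← Fintype.one_lt_card_iff_nontrivial]
        omega
      have hne' : Nonempty V := inferInstance
      obtain ⟨u, v, huv⟩ := SimpleGraph.exists_dist_eq_diam (G := G)
      rw [hdiam] at huv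
      have hne : u ≠ v := by
        rintro rfl
        rw [SimpleGraph.dist_self] at huv
        omega
      have hnadj : ¬G.Adj u v := by
        intro h
        have := SimpleGraph.dist_eq_one_iff_adj.mpr h
        omega
      have h1 : 1 ≤ Gᶜ.edgeFinset.card := Finset.card_pos.mpr ⟨s(u, v), by
        simp only [SimpleGraph.mem_edgeFinset, SimpleGraph.mem_edgeSet, SimpleGraph.compl_adj]
        exact ⟨hne, hnadj⟩⟩
      have hsplit := edge_split G
      rw [hcard] at hsplit
      have hEn : G.edgeSet.ncard = G.edgeFinset.card := Set.ncard_eq_toFinset_card' _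
      rw [hEn, arith2' k n hk hn']
      have : G.edgeFinset.card + 1 ≤ n.choose 2 := by omega
      omega
    · refine ⟨Fin n, inferInstance, band (c2 n), ⟨?_, ?_⟩, by simp, band2_diam (by omega), ?_⟩
      · simp only [Fintype.card_fin]
        omega
      · intro S hS
        exact band2_conn (by omega) (by omega : k ≤ n - 2) S hS
      · have hedge := band2_edges (n := n) (by omega)
        have hEn : (band (c2 n)).edgeSet.ncard = (band (c2 n)).edgeFinset.card :=
          Set.ncard_eq_toFinset_card' _
        rw [hEn, arith2' k n hk hn']
        omega
  · -- d = 3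
    have hn' : 2 * k + 2 ≤ n := by omega
    constructor
    · intro V _ G hkc hcard hdiam
      classical
      have hnt : Nontrivial V := by
        rw [← Fintype.one_lt_card_iff_nontrivial]
        omega
      have hne' : Nonempty V := inferInstance
      obtain ⟨u, v, huv⟩ := SimpleGraph.exists_dist_eq_diam (G := G)
      rw [hdiam] at huv
      have h1 := compl_many G huv
      rw [hcard] at h1
      have hsplit := edge_split G
      rw [hcard] at hsplit
      have hEn : G.edgeSet.ncard = G.edgeFinset.card := Set.ncard_eq_toFinset_card' _
      rw [hEn, arith3' k n hk hn']
      have : G.edgeFinset.card + (n - 1) ≤ n.choose 2 := by omega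
      omega
    · refine ⟨Fin n, inferInstance, band (c3 k n), ⟨?_, ?_⟩, by simp, band3_diam hk hn', ?_⟩
      · simp only [Fintype.card_fin]
        omega
      · intro S hS
        exact band3_conn hk hn' S hS
      · have hedge := band3_edges hk hn'
        have hEn : (band (c3 k n)).edgeSet.ncard = (band (c3 k n)).edgeFinset.card :=
          Set.ncard_eq_toFinset_card' _
        rw [hEn, arith3' k n hk hn']
        omega
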